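/- If G is a signed graph whose underlying unsigned graph is unicyclic (contains exactly one cycle), then a_sd(G) ≤ 2. Moreover, a_sd(G) = 2 if and only if the underlying graph is a cycle and all edges of G are negative. -/

import Mathlib

open Set

variable {V : Type*}

/-- Number of `G`-neighbors of `v` inside the set `S`. -/
noncomputable def ndegOn (G : SimpleGraph V) (S : Set V) (v : V) : ℕ := (S ∩ {u | G.Adj v u}).ncard

/-- Total number of `G`-neighbors of `v`. -/
noncomputable def ndeg (G : SimpleGraph V) (v : V) : ℕ := {u | G.Adj v u}.ncard

/-- `S` is a defensive alliance in the signed graph `(V, Gp, Gn)`. -/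
def IsDefAlliance (Gp Gn : SimpleGraph V) (S : Set V) : Prop :=
  S.Nonempty ∧ ∀ v ∈ S,
    ndegOn Gn S v ≤ ndegOn Gp S v + 1 ∧ ndegOn Gn Sᶜ v ≤ ndegOn Gp S v + 1

/-- Defensive alliance number: minimum size of a defensive alliance. -/
noncomputable def asd (Gp Gn : SimpleGraph V) : ℕ :=
  sInf {n | ∃ S : Set V, IsDefAlliance Gp Gn S ∧ S.ncard = n}

lemma exists_cycle_of_two_nbrs [Fintype V] [Nonempty V] (G : SimpleGraph V)
    (h : ∀ v : V, ∃ a b : V, a ≠ b ∧ G.Adj v a ∧ G.Adj v b) :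
    ∃ (v : V) (c : G.Walk v v), c.IsCycle := by
  classical
  set P : ℕ → Prop := fun n => ∃ (u v : V) (p : G.Walk u v), p.IsPath ∧ p.length = n with hP
  have h1 : P 1 := by
    obtain ⟨a, b, hab, ha, _⟩ := h (Classical.arbitrary V)
    exact ⟨_, _, SimpleGraph.Walk.cons ha SimpleGraph.Walk.nil, by simp [ha.ne], by simp⟩
  have hcard : 1 ≤ Fintype.card V := Fintype.card_pos
  set N := Nat.findGreatest P (Fintype.card V) with hN
  have hPN : P N := Nat.findGreatest_spec hcard h1
  obtain ⟨u, v, p, hp, hlen⟩ := hPN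
  have hN1 : 1 ≤ N := Nat.le_findGreatest hcard h1
  -- p is nonempty, write p = cons h q
  cases p with
  | nil => simp at hlen; omega
  | cons hux q =>
    rename_i x
    -- u's neighbors
    obtain ⟨a, b, hab, ha, hb⟩ := h u
    -- find neighbor w ≠ x
    have : ∃ w, G.Adj u w ∧ w ≠ x := by
      by_cases hax : a = x
      · exact ⟨b, hb, fun hbx => hab (hax ▸ hbx ▸ rfl)⟩
      · exact ⟨a, ha, hax⟩
    obtain ⟨w, hw, hwx⟩ := this
    set p' : G.Walk u v := SimpleGraph.Walk.cons hux q with hp'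
    have hup : u ∉ q.support := by
      have := hp
      rw [SimpleGraph.Walk.cons_isPath_iff] at this
      exact this.2
    have hedge : s(u, w) ∉ p'.edges := by
      simp only [hp', SimpleGraph.Walk.edges_cons, List.mem_cons]
      rintro (heq | hmem)
      · rw [Sym2.congr_right] at heq; exact hwx heq
      · exact hup (SimpleGraph.Walk.fst_mem_support_of_mem_edges q hmem)
    by_cases hws : w ∈ p'.support
    · -- cycle
      have ht : (p'.takeUntil w hws).IsPath := hp.takeUntil hws
      have hte : (p'.takeUntil w hws).edges ⊆ p'.edges := SimpleGraph.Walk.edges_takeUntil_subset _ hws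
      refine ⟨w, SimpleGraph.Walk.cons hw.symm (p'.takeUntil w hws), ?_⟩
      rw [SimpleGraph.Walk.cons_isCycle_iff]
      exact ⟨ht, fun hm => hedge (hte (by rwa [Sym2.eq_swap] at hm))⟩
    · -- extend, contradiction with maximality
      exfalso
      have hext : (SimpleGraph.Walk.cons hw.symm p').IsPath := hp.cons hws
      have : P (N + 1) := ⟨w, v, _, hext, by simp [hlen]⟩
      have hb2 : N + 1 ≤ Fintype.card V := by
        have := hext.length_lt; simp [hlen] at this
        omega
      exact Nat.findGreatest_is_greatest (lt_add_one N) hb2 this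


lemma ndeg_eq_degree [Fintype V] (G : SimpleGraph V) [DecidableRel G.Adj] (v : V) :
    ndeg G v = G.degree v := by
  rw [ndeg, ← SimpleGraph.card_neighborSet_eq_degree, ← Nat.card_coe_set_eq,
    Nat.card_eq_fintype_card]
  rfl


lemma ndeg_sup [Finite V] (Gp Gn : SimpleGraph V) (hdisj : Disjoint Gp Gn) (v : V) :
    ndeg (Gp ⊔ Gn) v = ndeg Gp v + ndeg Gn v := by
  have hU : {u | (Gp ⊔ Gn).Adj v u} = {u | Gp.Adj v u} ∪ {u | Gn.Adj v u} := by
    ext u; simp [SimpleGraph.sup_adj]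
  have hbot : Gp ⊓ Gn = ⊥ := disjoint_iff.mp hdisj
  have hd : Disjoint {u | Gp.Adj v u} {u | Gn.Adj v u} := by
    rw [Set.disjoint_left]
    intro u h1 h2
    have : (Gp ⊓ Gn).Adj v u := ⟨h1, h2⟩
    rw [hbot] at this
    exact this
  rw [ndeg, hU, Set.ncard_union_eq hd (Set.toFinite _) (Set.toFinite _)]
  rfl


lemma ndegOn_le_ndeg [Finite V] (G : SimpleGraph V) (S : Set V) (v : V) :
    ndegOn G S v ≤ ndeg G v :=
  Set.ncard_le_ncard Set.inter_subset_right (Set.toFinite _)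


lemma reachable_delete {G : SimpleGraph V} {x y : V} (e : Sym2 V) (he : e = s(x,y))
    (hR : (G.deleteEdges {e}).Reachable x y) {a b : V} (hab : G.Reachable a b) :
    (G.deleteEdges {e}).Reachable a b := by
  obtain ⟨p⟩ := hab
  induction p with
  | nil => rfl
  | cons h q ih =>
    rename_i c d _
    refine SimpleGraph.Reachable.trans ?_ ih
    by_cases hec : s(c, d) = e
    · rw [he] at hec
      rw [Sym2.eq_iff] at hec
      rcases hec with ⟨rfl, rfl⟩ | ⟨rfl, rfl⟩
      · exact hR
      · exact hR.symm
    · exact SimpleGraph.Adj.reachable (by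
        rw [SimpleGraph.deleteEdges_adj]
        exact ⟨h, by simpa using hec⟩)

lemma edgeFinset_card_eq_ncard (G : SimpleGraph V) [Fintype V] [Fintype G.edgeSet] :
    G.edgeFinset.card = G.edgeSet.ncard := (Set.ncard_eq_toFinset_card' _).symm


lemma structure_lemma [Fintype V] (Gp Gn : SimpleGraph V) (hdisj : Disjoint Gp Gn)
    (huni : ∃! s : Set (Sym2 V), ∃ (v : V) (w : (Gp ⊔ Gn).Walk v v),
      w.IsCycle ∧ s = {e | e ∈ w.edges})
    (h2 : ∀ v, 2 ≤ ndeg Gn v) :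
    (Gp ⊔ Gn).Connected ∧ (∀ v, ndeg (Gp ⊔ Gn) v = 2) ∧ Gp = ⊥ := by
  classical
  set G := Gp ⊔ Gn with hGdef
  obtain ⟨s, ⟨v0, w0, hw0, hs⟩, huniq⟩ := huni
  have hNV : Nonempty V := ⟨v0⟩
  have hnbrs : ∀ v : V, ∃ a b : V, a ≠ b ∧ G.Adj v a ∧ G.Adj v b := by
    intro v
    have : 1 < ({u | Gn.Adj v u}).ncard := h2 v
    obtain ⟨a, b, ha, hb, hab⟩ := (Set.one_lt_ncard_iff (Set.toFinite _)).mp this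
    exact ⟨a, b, hab, Or.inr ha, Or.inr hb⟩
  -- an edge of the cycle
  have hlen : 3 ≤ w0.length := hw0.three_le_length
  have hene : w0.edges ≠ [] := by
    intro h
    have := SimpleGraph.Walk.length_edges w0
    rw [h] at this
    simp at this
    omega
  obtain ⟨e, he⟩ := List.exists_mem_of_ne_nil _ hene
  have hes : e ∈ s := by rw [hs]; exact he
  have heG : e ∈ G.edgeSet := w0.edges_subset_edgeSet he
  -- connectivity
  have hpre : ∀ u : V, G.Reachable u v0 := by
    intro u
    set K : Set V := {x | G.Reachable u x} with hK
    have hKne : Nonempty K := ⟨⟨u, SimpleGraph.Reachable.refl u⟩⟩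
    have hind : ∀ v : K, ∃ a b : K, a ≠ b ∧ (G.induce K).Adj v a ∧ (G.induce K).Adj v b := by
      rintro ⟨v, hv⟩
      obtain ⟨a, b, hab, hva, hvb⟩ := hnbrs v
      have haK : a ∈ K := hv.trans hva.reachable
      have hbK : b ∈ K := hv.trans hvb.reachable
      exact ⟨⟨a, haK⟩, ⟨b, hbK⟩, by simpa using hab, hva, hvb⟩
    obtain ⟨⟨z, hz⟩, c, hc⟩ := exists_cycle_of_two_nbrs (G.induce K) hind
    have hc' : (c.map (SimpleGraph.Embedding.induce (G := G) K).toHom).IsCycle :=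
      hc.map (SimpleGraph.Embedding.induce (G := G) K).injective
    have hseq : {e' | e' ∈ (c.map (SimpleGraph.Embedding.induce (G := G) K).toHom).edges} = s :=
      huniq _ ⟨z, _, hc', rfl⟩
    have hec : e ∈ (c.map (SimpleGraph.Embedding.induce (G := G) K).toHom).edges := by
      have : e ∈ {e' | e' ∈ (c.map (SimpleGraph.Embedding.induce (G := G) K).toHom).edges} := by
        rw [hseq]; exact hes
      exact this
    induction e using Sym2.ind with
    | _ x y =>
      have hx1 : x ∈ (c.map (SimpleGraph.Embedding.induce (G := G) K).toHom).support :=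
        SimpleGraph.Walk.fst_mem_support_of_mem_edges _ hec
      have hx2 : x ∈ w0.support := SimpleGraph.Walk.fst_mem_support_of_mem_edges _ he
      have hxK : x ∈ K := by
        rw [SimpleGraph.Walk.support_map] at hx1
        obtain ⟨⟨x', hx'⟩, _, rfl⟩ := List.mem_map.mp hx1
        exact hx'
      have hvx : G.Reachable v0 x := ⟨w0.takeUntil x hx2⟩
      exact (hxK : G.Reachable u x).trans hvx.symm
  have hconn : G.Connected := by
    rw [SimpleGraph.connected_iff]
    exact ⟨fun a b => (hpre a).trans (hpre b).symm, hNV⟩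
  -- delete e
  set G' := G.deleteEdges {e} with hG'
  have hacyc : G'.IsAcyclic := by
    intro z c hc
    have hle : G' ≤ G := by rw [hG']; exact SimpleGraph.deleteEdges_le _
    have hc2 : (c.mapLe hle).IsCycle := hc.mapLe hle
    have hseq : {e' | e' ∈ (c.mapLe hle).edges} = s := huniq _ ⟨z, _, hc2, rfl⟩
    have hece : e ∈ c.edges := by
      have : e ∈ {e' | e' ∈ (c.mapLe hle).edges} := by rw [hseq]; exact hes
      simpa [SimpleGraph.Walk.mapLe, SimpleGraph.Walk.edges_map] using this
    have := c.edges_subset_edgeSet hece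
    rw [hG', SimpleGraph.edgeSet_deleteEdges] at this
    exact this.2 rfl
  have hRe : ∀ x y, e = s(x, y) → G'.Reachable x y := by
    intro x y hxy
    have hnb : ¬ G.IsBridge e := by
      rw [SimpleGraph.isBridge_iff_mem_and_forall_cycle_notMem]
      push_neg
      exact ⟨v0, w0, hw0, he⟩
      exact heG
    rw [hxy, SimpleGraph.isBridge_iff] at hnb
    push_neg at hnb
    have hadj : G.Adj x y := by rw [← SimpleGraph.mem_edgeSet, ← hxy]; exact heG
    have := hnb
    rw [hG', SimpleGraph.deleteEdges, hxy]
    exact this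
  have hconn' : G'.Connected := by
    rw [SimpleGraph.connected_iff]
    refine ⟨fun a b => ?_, hNV⟩
    induction e using Sym2.ind with
    | _ x y =>
      exact reachable_delete _ rfl (hRe x y rfl) (hconn.preconnected a b)
  have htree : G'.IsTree := ⟨hconn', hacyc⟩
  have hcount : G'.edgeSet.ncard + 1 = Fintype.card V := by
    rw [← edgeFinset_card_eq_ncard]
    exact htree.card_edgeFinset
  have hEG : G.edgeSet.ncard = Fintype.card V := by
    have hset : G'.edgeSet = G.edgeSet \ {e} := by
      rw [hG', SimpleGraph.edgeSet_deleteEdges]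
    rw [hset, Set.ncard_diff_singleton_add_one heG (Set.toFinite _)] at hcount
    exact hcount
  -- degree sum
  have hsum : ∑ v : V, G.degree v = 2 * Fintype.card V := by
    rw [SimpleGraph.sum_degrees_eq_twice_card_edges, edgeFinset_card_eq_ncard, hEG]
  have hndeg : ∀ v : V, ndeg G v = G.degree v := fun v => ndeg_eq_degree G v
  have hsum2 : ∑ v : V, ndeg G v = 2 * Fintype.card V := by
    rw [show (∑ v : V, ndeg G v) = ∑ v : V, G.degree v from Finset.sum_congr rfl
      (fun v _ => hndeg v), hsum]
  have hle : ∀ v : V, 2 ≤ ndeg G v := by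
    intro v
    rw [hGdef, ndeg_sup Gp Gn hdisj]
    have := h2 v
    omega
  have hdeg2 : ∀ v : V, ndeg G v = 2 := by
    by_contra hcon
    push_neg at hcon
    obtain ⟨v, hv⟩ := hcon
    have hlt : (2:ℕ) < ndeg G v := lt_of_le_of_ne (hle v) (Ne.symm hv)
    have hsl : ∑ _v : V, (2:ℕ) < ∑ v : V, ndeg G v :=
      Finset.sum_lt_sum (fun i _ => hle i) ⟨v, Finset.mem_univ v, hlt⟩
    rw [hsum2, Finset.sum_const, Finset.card_univ, smul_eq_mul] at hsl
    omega
  have hGp : Gp = ⊥ := by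
    ext a b
    simp only [SimpleGraph.bot_adj, iff_false]
    intro hadj
    have h0 : ndeg Gp a + ndeg Gn a = 2 := by
      rw [← ndeg_sup Gp Gn hdisj, ← hGdef]
      exact hdeg2 a
    have h2a := h2 a
    have hpos : 0 < ndeg Gp a := (Set.ncard_pos (Set.toFinite _)).mpr ⟨b, hadj⟩
    omega
  exact ⟨hconn, hdeg2, hGp⟩

lemma singleton_alliance [Finite V] (Gp Gn : SimpleGraph V) {v : V} (hv : ndeg Gn v ≤ 1) :
    IsDefAlliance Gp Gn {v} := by
  refine ⟨⟨v, rfl⟩, ?_⟩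
  rintro x rfl
  constructor
  · have h0 : ({x} : Set V) ∩ {u | Gn.Adj x u} = ∅ := by
      ext u
      simp only [Set.mem_inter_iff, Set.mem_singleton_iff, Set.mem_setOf_eq, Set.mem_empty_iff_false,
        iff_false, not_and]
      rintro rfl h
      exact Gn.irrefl h
    rw [ndegOn, h0, Set.ncard_empty]
    omega
  · have hle : ndegOn Gn {x}ᶜ x ≤ ndeg Gn x := ndegOn_le_ndeg Gn _ x
    omega

lemma pair_alliance [Finite V] (Gp Gn : SimpleGraph V) {v u : V} (h : Gn.Adj v u)
    (hv : ndeg Gn v ≤ 2) (hu : ndeg Gn u ≤ 2) :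
    IsDefAlliance Gp Gn {v, u} := by
  have key : ∀ a b : V, Gn.Adj a b → ndeg Gn a ≤ 2 →
      ndegOn Gn {a, b} a ≤ ndegOn Gp {a, b} a + 1 ∧
      ndegOn Gn ({a, b} : Set V)ᶜ a ≤ ndegOn Gp {a, b} a + 1 := by
    intro a b hab ha
    constructor
    · have hsub : ({a, b} : Set V) ∩ {w | Gn.Adj a w} ⊆ {b} := by
        rintro w ⟨hw1, hw2⟩
        rcases hw1 with rfl | rfl
        · exact absurd hw2 (Gn.irrefl)
        · rfl
      have := Set.ncard_le_ncard hsub (Set.toFinite _)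
      rw [Set.ncard_singleton] at this
      calc ndegOn Gn {a, b} a ≤ 1 := this
        _ ≤ _ + 1 := by omega
    · have hsub : ({a, b} : Set V)ᶜ ∩ {w | Gn.Adj a w} ⊆ {w | Gn.Adj a w} \ {b} := by
        rintro w ⟨hw1, hw2⟩
        refine ⟨hw2, ?_⟩
        intro hwb
        exact hw1 (Or.inr hwb)
      have h1 := Set.ncard_le_ncard hsub (Set.toFinite _)
      have h2 : ({w | Gn.Adj a w} \ {b}).ncard + 1 = ndeg Gn a :=
        Set.ncard_diff_singleton_add_one (by exact hab) (Set.toFinite _)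
      calc ndegOn Gn ({a, b} : Set V)ᶜ a ≤ ({w | Gn.Adj a w} \ {b}).ncard := h1
        _ ≤ 1 := by omega
        _ ≤ _ + 1 := by omega
  refine ⟨⟨v, Or.inl rfl⟩, ?_⟩
  rintro x (rfl | rfl)
  · exact key x u h hv
  · have hpair : ({v, x} : Set V) = {x, v} := by ext; simp; tauto
    have := key x v h.symm hu
    rwa [hpair]

theorem stmt6 [Fintype V] (Gp Gn : SimpleGraph V) (hdisj : Disjoint Gp Gn)
    (huni : ∃! s : Set (Sym2 V), ∃ (v : V) (w : (Gp ⊔ Gn).Walk v v),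
      w.IsCycle ∧ s = {e | e ∈ w.edges}) :
    asd Gp Gn ≤ 2 ∧
      (asd Gp Gn = 2 ↔
        ((Gp ⊔ Gn).Connected ∧ (∀ v : V, ndeg (Gp ⊔ Gn) v = 2) ∧ Gp = ⊥)) := by
  classical
  set A := {n | ∃ S : Set V, IsDefAlliance Gp Gn S ∧ S.ncard = n} with hA
  have hasd : asd Gp Gn = sInf A := rfl
  -- nonempty V
  have huni' := huni
  obtain ⟨s0, ⟨v00, w00, hw00, hs00⟩, _⟩ := huni'
  have hNV : Nonempty V := ⟨v00⟩
  -- the "all degrees ≥ 2" case produces a 2-element alliance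
  have hcase2 : (∀ v : V, 2 ≤ ndeg Gn v) → 2 ∈ A := by
    intro hh
    obtain ⟨hconn, hreg, hGp⟩ := structure_lemma Gp Gn hdisj huni hh
    have hGn2 : ∀ v : V, ndeg Gn v = 2 := by
      intro v
      have := hreg v
      rwa [hGp, bot_sup_eq] at this
    obtain ⟨v⟩ := hNV
    have hpos : 0 < ({u | Gn.Adj v u}).ncard := by
      have := hGn2 v
      rw [ndeg] at this
      omega
    obtain ⟨u, hu⟩ := (Set.ncard_pos (Set.toFinite _)).mp hpos
    refine ⟨{v, u}, pair_alliance Gp Gn hu (le_of_eq (hGn2 v)) (le_of_eq (hGn2 u)), ?_⟩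
    rw [Set.ncard_pair (Gn.ne_of_adj hu)]
  have hsmall : (¬ ∀ v : V, 2 ≤ ndeg Gn v) → 1 ∈ A := by
    intro hh
    push_neg at hh
    obtain ⟨v, hv⟩ := hh
    exact ⟨{v}, singleton_alliance Gp Gn (by omega), Set.ncard_singleton v⟩
  have hle2 : asd Gp Gn ≤ 2 := by
    rw [hasd]
    by_cases hh : ∀ v : V, 2 ≤ ndeg Gn v
    · exact Nat.sInf_le (hcase2 hh)
    · exact le_trans (Nat.sInf_le (hsmall hh)) (by omega)
  refine ⟨hle2, ?_, ?_⟩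
  · -- forward direction
    intro heq
    have hh : ∀ v : V, 2 ≤ ndeg Gn v := by
      by_contra hcon
      have h1 : sInf A ≤ 1 := Nat.sInf_le (hsmall hcon)
      rw [hasd] at heq
      omega
    exact structure_lemma Gp Gn hdisj huni hh
  · -- backward direction
    rintro ⟨hconn, hreg, hGp⟩
    have hGn2 : ∀ v : V, ndeg Gn v = 2 := by
      intro v
      have := hreg v
      rwa [hGp, bot_sup_eq] at this
    have h2A : 2 ∈ A := hcase2 (fun v => le_of_eq (hGn2 v).symm)
    have hlb : ∀ n ∈ A, 2 ≤ n := by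
      rintro n ⟨S, ⟨hSne, hScond⟩, rfl⟩
      by_contra hlt
      push_neg at hlt
      have h1 : S.ncard = 1 := by
        have := (Set.ncard_pos (Set.toFinite _)).mpr hSne
        omega
      obtain ⟨v, rfl⟩ := Set.ncard_eq_one.mp h1
      obtain ⟨hc1, hc2⟩ := hScond v rfl
      have hGp0 : ndegOn Gp {v} v = 0 := by
        rw [ndegOn, hGp]
        simp
      have hfull : ({v} : Set V)ᶜ ∩ {u | Gn.Adj v u} = {u | Gn.Adj v u} := by
        ext u
        simp only [Set.mem_inter_iff, Set.mem_compl_iff, Set.mem_singleton_iff, Set.mem_setOf_eq,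
          and_iff_right_iff_imp]
        intro hu hrfl
        subst hrfl
        exact Gn.irrefl hu
      have : ndegOn Gn ({v} : Set V)ᶜ v = 2 := by
        rw [ndegOn, hfull]
        exact hGn2 v
      omega
    have hmem : sInf A ∈ A := Nat.sInf_mem ⟨2, h2A⟩
    have := hlb _ hmem
    have hle : sInf A ≤ 2 := Nat.sInf_le h2A
    rw [hasd]
    omega
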